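/- Let n ≥ 1 be an integer, let s, t ∈ [0, 1] with s < t, let N ≥ 1 be a natural number, and let r₁, …, r_n ∈ {0, 1, …, N−1} be natural numbers. Define U_N^{(n)}(s, t, r₁,…,r_n) as the set of integer tuples (u₁, v₁, u₂, v₂, …, u_n, v_n) satisfying ⌊Ns⌋ ≤ u₁ ≤ v₁ < u₂ ≤ v₂ < u₃ ≤ ⋯ < u_n ≤ v_n ≤ ⌊Nt⌋ − 1 and v_j − u_j = r_j for every j = 1, …, n. Then the cardinality of this set equals the binomial coefficient C((⌊Nt⌋ − ⌊Ns⌋ − Σ_{j=1}^n r_j)₊, n) (where x₊ := max(x, 0)); consequently #U_N^{(n)}(s,t,r) / N^n is bounded uniformly in N and in the r_j, and for each fixed (r₁,…,r_n), #U_N^{(n)}(s,t,r) / N^n → (t − s)^n / n! as N → ∞. -/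

import Mathlib

open Filter Finset

lemma countStrict (n : ℕ) (M : ℤ) :
    {z : Fin n → ℤ | StrictMono z ∧ ∀ j, z j ∈ Finset.Icc (0:ℤ) M}.ncard
      = (M + 1).toNat.choose n := by
  set S := {z : Fin n → ℤ | StrictMono z ∧ ∀ j, z j ∈ Finset.Icc (0:ℤ) M} with hS
  set F : (Fin n → ℤ) → Finset ℤ := fun z => Finset.image z Finset.univ with hF
  have hcard : ∀ z ∈ S, (F z).card = n := by
    intro z hz
    rw [hF, Finset.card_image_of_injective _ hz.1.injective, Finset.card_univ,
      Fintype.card_fin]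
  have hinj : Set.InjOn F S := by
    intro z hz w hw h
    have hz' : ∀ x, z x ∈ F z := fun x => Finset.mem_image_of_mem _ (Finset.mem_univ x)
    have hw' : ∀ x, w x ∈ F z := by
      intro x; rw [h]; exact Finset.mem_image_of_mem _ (Finset.mem_univ x)
    rw [Finset.orderEmbOfFin_unique (hcard z hz) hz' hz.1,
      Finset.orderEmbOfFin_unique (hcard z hz) hw' hw.1]
  have himg : F '' S = ↑((Finset.Icc (0:ℤ) M).powersetCard n) := by
    ext u
    simp only [Set.mem_image, Set.mem_setOf_eq, Finset.mem_coe, Finset.mem_powersetCard]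
    constructor
    · rintro ⟨z, hz, rfl⟩
      refine ⟨?_, hcard z hz⟩
      intro x hx
      rcases Finset.mem_image.1 hx with ⟨j, -, rfl⟩
      exact hz.2 j
    · rintro ⟨hsub, hc⟩
      refine ⟨⇑(u.orderEmbOfFin hc), ⟨(u.orderEmbOfFin hc).strictMono, fun j => hsub (u.orderEmbOfFin_mem hc j)⟩, ?_⟩
      have : Finset.image (⇑(u.orderEmbOfFin hc)) Finset.univ = u := by
        apply Finset.coe_injective
        rw [Finset.coe_image, Finset.coe_univ, Set.image_univ, Finset.range_orderEmbOfFin]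
      exact this
  calc S.ncard = (F '' S).ncard := (Set.ncard_image_of_injOn hinj).symm
    _ = ((Finset.Icc (0:ℤ) M).powersetCard n).card := by rw [himg, Set.ncard_coe_finset]
    _ = (M + 1).toNat.choose n := by
        rw [Finset.card_powersetCard, Int.card_Icc]
        norm_num

lemma coreCount (n : ℕ) (hn : 0 < n) (a b : ℤ) (r : Fin n → ℕ) :
    {p : (Fin n → ℤ) × (Fin n → ℤ) |
        a ≤ p.1 ⟨0, hn⟩ ∧ (∀ j : Fin n, p.1 j ≤ p.2 j) ∧
        (∀ j : Fin n, ∀ h : (j : ℕ) + 1 < n, p.2 j < p.1 ⟨(j : ℕ) + 1, h⟩) ∧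
        p.2 ⟨n - 1, Nat.sub_lt hn Nat.one_pos⟩ ≤ b ∧
        ∀ j : Fin n, p.2 j - p.1 j = (r j : ℤ)}.ncard
      = (b - a + 1 - ∑ j : Fin n, (r j : ℤ)).toNat.choose n := by
  obtain ⟨m, rfl⟩ : ∃ m, n = m + 1 := ⟨n - 1, by omega⟩
  set r' : ℕ → ℤ := fun i => if h : i < m + 1 then (r ⟨i, h⟩ : ℤ) else 0 with hr'
  have hr'j : ∀ j : Fin (m + 1), r' (j : ℕ) = (r j : ℤ) := by
    intro j; simp only [hr']; rw [dif_pos j.isLt]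
  set c : Fin (m + 1) → ℤ := fun j => ∑ i ∈ Finset.range (j : ℕ), r' i with hc
  set Sr : ℤ := ∑ j : Fin (m + 1), (r j : ℤ) with hS2
  have hsum : c (Fin.last m) + r' m = Sr := by
    rw [hS2, hc]
    have : ∀ j : Fin (m+1), (r j : ℤ) = r' (j : ℕ) := fun j => (hr'j j).symm
    simp_rw [this]
    rw [Fin.sum_univ_eq_sum_range (fun i => r' i) (m + 1), Finset.sum_range_succ]
    simp [Fin.last]
  have hlast : (⟨m + 1 - 1, by omega⟩ : Fin (m + 1)) = Fin.last m := by
    apply Fin.ext; simp [Fin.last]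
  have hzero : (⟨0, hn⟩ : Fin (m + 1)) = 0 := by apply Fin.ext; simp
  set M : ℤ := b - a - Sr with hM
  set T := {p : (Fin (m+1) → ℤ) × (Fin (m+1) → ℤ) |
        a ≤ p.1 ⟨0, hn⟩ ∧ (∀ j, p.1 j ≤ p.2 j) ∧
        (∀ j : Fin (m+1), ∀ h : (j : ℕ) + 1 < m + 1, p.2 j < p.1 ⟨(j : ℕ) + 1, h⟩) ∧
        p.2 ⟨m + 1 - 1, by omega⟩ ≤ b ∧
        ∀ j, p.2 j - p.1 j = (r j : ℤ)} with hT
  set G : ((Fin (m+1) → ℤ) × (Fin (m+1) → ℤ)) → (Fin (m+1) → ℤ) :=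
    fun p j => p.1 j - a - c j with hG
  have key : ∀ p ∈ T, StrictMono (G p) := by
    intro p hp
    obtain ⟨h1, h2, h3, h4, h5⟩ := hp
    rw [Fin.strictMono_iff_lt_succ]
    intro i
    have hlt : ((i.castSucc : Fin (m+1)) : ℕ) + 1 < m + 1 := by
      have := i.isLt; simp only [Fin.coe_castSucc]; omega
    have h3' := h3 i.castSucc hlt
    have hmk : (⟨((i.castSucc : Fin (m+1)) : ℕ) + 1, hlt⟩ : Fin (m+1)) = i.succ := by
      apply Fin.ext; simp
    rw [hmk] at h3'
    have hv := h5 i.castSucc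
    have hcstep : c i.succ = c i.castSucc + r' (i.castSucc : ℕ) := by
      rw [hc]; simp only [Fin.val_succ, Fin.coe_castSucc]
      rw [Finset.sum_range_succ]
    simp only [hG]
    rw [hcstep, hr'j]
    omega
  have hinj : Set.InjOn G T := by
    intro p hp q hq h
    have h1 : p.1 = q.1 := by
      funext j
      have := congrFun h j
      simp only [hG] at this
      omega
    have h2 : p.2 = q.2 := by
      funext j
      have hp5 := hp.2.2.2.2 j
      have hq5 := hq.2.2.2.2 j
      rw [congrFun h1 j] at hp5
      omega
    exact Prod.ext h1 h2
  have himg : G '' T = {z : Fin (m+1) → ℤ | StrictMono z ∧ ∀ j, z j ∈ Finset.Icc (0:ℤ) M} := by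
    ext z
    constructor
    · rintro ⟨p, hp, rfl⟩
      refine ⟨key p hp, fun j => Finset.mem_Icc.2 ⟨?_, ?_⟩⟩
      · have h0 : G p 0 ≤ G p j := (key p hp).monotone (Fin.zero_le j)
        have : c 0 = 0 := by simp [hc]
        have h1 := hp.1
        rw [hzero] at h1
        simp only [hG, this] at h0 ⊢
        omega
      · have h0 : G p j ≤ G p (Fin.last m) := (key p hp).monotone (Fin.le_last j)
        have h4 := hp.2.2.2.1
        rw [hlast] at h4
        have h5 := hp.2.2.2.2 (Fin.last m)
        have hrl : (r (Fin.last m) : ℤ) = r' m := by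
          rw [← hr'j (Fin.last m)]; rfl
        simp only [hG] at h0 ⊢
        have := hsum
        rw [hM]
        omega
    · rintro ⟨hmono, hbdd⟩
      refine ⟨(fun j => z j + a + c j, fun j => z j + a + c j + r j), ⟨?_, ?_, ?_, ?_, ?_⟩, ?_⟩
      · rw [hzero]
        have hb0 := (Finset.mem_Icc.1 (hbdd 0)).1
        have hc0 : c 0 = 0 := by simp [hc]
        simp only []
        rw [hc0]
        omega
      · intro j; simp only []; omega
      · intro j h
        have hlt : z j < z ⟨(j : ℕ) + 1, h⟩ := by
          apply hmono
          rw [Fin.lt_def]; simp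
        have hcstep : c ⟨(j : ℕ) + 1, h⟩ = c j + r' (j : ℕ) := by
          rw [hc]; simp only []
          rw [Finset.sum_range_succ]
        simp only []
        rw [hcstep, hr'j]
        omega
      · rw [hlast]
        simp only []
        have := (Finset.mem_Icc.1 (hbdd (Fin.last m))).2
        have hrl : (r (Fin.last m) : ℤ) = r' m := by
          rw [← hr'j (Fin.last m)]; rfl
        have := hsum
        rw [hM] at *
        omega
      · intro j; ring
      · funext j; simp only [hG]; ring
  have : T.ncard = (M + 1).toNat.choose (m + 1) := by
    rw [← Set.ncard_image_of_injOn hinj, himg, countStrict]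
  rw [hT] at this
  convert this using 3
  omega

/-- Lemma `simplex_nt`.
Let `U_N^{(n)}(s,t,r)` be the set of tuples `⌊Ns⌋ ≤ u₁ ≤ v₁ < u₂ ≤ v₂ < ⋯ < u_n ≤ v_n ≤ ⌊Nt⌋−1`
with `v_j − u_j = r_j`.  Then its cardinality equals
`C((⌊Nt⌋ − ⌊Ns⌋ − Σ r_j)₊, n)`; consequently `#U/N^n` is uniformly bounded, and for fixed `r`,
`#U/N^n → (t−s)^n/n!` as `N → ∞`. -/
theorem stmt7 (n : ℕ) (hn : 0 < n) (s t : ℝ)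
    (hs : 0 ≤ s) (ht : t ≤ 1) (hst : s < t)
    (U : ℕ → (Fin n → ℕ) → Set ((Fin n → ℤ) × (Fin n → ℤ)))
    (hU : ∀ (N : ℕ) (r : Fin n → ℕ), U N r =
      {p | ⌊(N : ℝ) * s⌋ ≤ p.1 ⟨0, hn⟩ ∧
           (∀ j : Fin n, p.1 j ≤ p.2 j) ∧
           (∀ j : Fin n, ∀ h : (j : ℕ) + 1 < n, p.2 j < p.1 ⟨(j : ℕ) + 1, h⟩) ∧
           p.2 ⟨n - 1, by omega⟩ ≤ ⌊(N : ℝ) * t⌋ - 1 ∧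
           ∀ j : Fin n, p.2 j - p.1 j = (r j : ℤ)}) :
    (∀ N : ℕ, 1 ≤ N → ∀ r : Fin n → ℕ, (∀ j, r j ≤ N - 1) →
      (U N r).ncard =
        Nat.choose (⌊(N : ℝ) * t⌋ - ⌊(N : ℝ) * s⌋ - ∑ j : Fin n, (r j : ℤ)).toNat n) ∧
    (∃ Cb : ℝ, ∀ N : ℕ, 1 ≤ N → ∀ r : Fin n → ℕ, (∀ j, r j ≤ N - 1) →
      ((U N r).ncard : ℝ) / (N : ℝ) ^ n ≤ Cb) ∧
    (∀ r : Fin n → ℕ, Tendsto (fun N : ℕ => ((U N r).ncard : ℝ) / (N : ℝ) ^ n) atTop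
      (nhds ((t - s) ^ n / (n.factorial : ℝ)))) := by
  have count : ∀ (N : ℕ) (r : Fin n → ℕ), (U N r).ncard =
      Nat.choose (⌊(N : ℝ) * t⌋ - ⌊(N : ℝ) * s⌋ - ∑ j : Fin n, (r j : ℤ)).toNat n := by
    intro N r
    rw [hU]
    have h := coreCount n hn ⌊(N : ℝ) * s⌋ (⌊(N : ℝ) * t⌋ - 1) r
    convert h using 3
    ring
  have hts : 0 < t - s := by linarith
  refine ⟨fun N _ r _ => count N r, ⟨1, ?_⟩, ?_⟩
  · intro N hN r hr
    rw [count]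
    have hfloor_t : ⌊(N : ℝ) * t⌋ ≤ (N : ℤ) := by
      have h1 : (N : ℝ) * t ≤ ((N : ℤ) : ℝ) := by push_cast; nlinarith [Nat.cast_nonneg (α := ℝ) N]
      have h2 := Int.floor_le_floor h1
      simpa using h2
    have hfloor_s : 0 ≤ ⌊(N : ℝ) * s⌋ := Int.floor_nonneg.2 (by positivity)
    have hsum : 0 ≤ ∑ j : Fin n, (r j : ℤ) :=
      Finset.sum_nonneg fun j _ => Int.natCast_nonneg _
    have hk : (⌊(N : ℝ) * t⌋ - ⌊(N : ℝ) * s⌋ - ∑ j : Fin n, (r j : ℤ)).toNat ≤ N := by omega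
    have hle : Nat.choose (⌊(N : ℝ) * t⌋ - ⌊(N : ℝ) * s⌋ - ∑ j : Fin n, (r j : ℤ)).toNat n
        ≤ N ^ n := (Nat.choose_le_choose n hk).trans (Nat.choose_le_pow N n)
    have hNpos : (0 : ℝ) < (N : ℝ) ^ n := by positivity
    rw [div_le_one hNpos]
    exact_mod_cast hle
  · intro r
    set m : ℕ → ℤ := fun N => ⌊(N : ℝ) * t⌋ - ⌊(N : ℝ) * s⌋ - ∑ j : Fin n, (r j : ℤ) with hm
    set C0 : ℝ := ((∑ j : Fin n, (r j : ℤ) : ℤ) : ℝ) with hC0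
    have hlb : ∀ N : ℕ, (N : ℝ) * (t - s) - 1 - C0 ≤ (m N : ℝ) := by
      intro N
      have h1 : (N : ℝ) * t - 1 < (⌊(N : ℝ) * t⌋ : ℝ) := Int.sub_one_lt_floor _
      have h2 : ((⌊(N : ℝ) * s⌋ : ℤ) : ℝ) ≤ (N : ℝ) * s := Int.floor_le _
      simp only [hm, hC0]
      push_cast
      nlinarith
    have hub : ∀ N : ℕ, (m N : ℝ) ≤ (N : ℝ) * (t - s) + 1 := by
      intro N
      have h1 : ((⌊(N : ℝ) * t⌋ : ℤ) : ℝ) ≤ (N : ℝ) * t := Int.floor_le _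
      have h2 : (N : ℝ) * s - 1 < (⌊(N : ℝ) * s⌋ : ℝ) := Int.sub_one_lt_floor _
      have h3 : (0 : ℝ) ≤ C0 := by
        rw [hC0]; push_cast; positivity
      simp only [hm]
      push_cast
      push_cast [hC0] at h3
      nlinarith
    have htend : Tendsto (fun N : ℕ => (N : ℝ) * (t - s)) atTop atTop :=
      Tendsto.atTop_mul_const hts tendsto_natCast_atTop_atTop
    have hev : ∀ᶠ N : ℕ in atTop, (n : ℝ) + C0 + 1 ≤ (N : ℝ) * (t - s) :=
      htend.eventually_ge_atTop _
    have hev1 : ∀ᶠ N : ℕ in atTop, 1 ≤ N := eventually_ge_atTop 1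
    have hevn : ∀ᶠ N : ℕ in atTop, (n : ℤ) ≤ m N := by
      filter_upwards [hev] with N hN
      have := hlb N
      have : (n : ℝ) ≤ (m N : ℝ) := by linarith
      exact_mod_cast this
    -- target function
    have keyeq : ∀ᶠ N : ℕ in atTop,
        (((U N r).ncard : ℝ) / (N : ℝ) ^ n) =
        (∏ i ∈ Finset.range n, (((m N : ℤ) : ℝ) - i) / N) / (n.factorial : ℝ) := by
      filter_upwards [hevn, hev1] with N hNn hN1
      rw [count N r]
      have hm0 : (0 : ℤ) ≤ m N := le_trans (by exact_mod_cast Nat.zero_le n) hNn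
      set k : ℕ := (m N).toNat with hk
      have hkn : n ≤ k := by omega
      have hcast : (k : ℝ) = ((m N : ℤ) : ℝ) := by
        rw [hk]; exact_mod_cast Int.toNat_of_nonneg hm0
      have hdesc : ((k.choose n : ℕ) : ℝ) = (k.descFactorial n : ℝ) / (n.factorial : ℝ) := by
        rw [Nat.descFactorial_eq_factorial_mul_choose]
        push_cast
        field_simp
      have hprod : ((k.descFactorial n : ℕ) : ℝ) = ∏ i ∈ Finset.range n, (((m N : ℤ) : ℝ) - i) := by
        rw [Nat.descFactorial_eq_prod_range, Nat.cast_prod]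
        apply Finset.prod_congr rfl
        intro i hi
        have hik : i ≤ k := le_trans (Nat.le_of_lt (Finset.mem_range.1 hi)) hkn
        rw [Nat.cast_sub hik, hcast]
      have hNpos : (0 : ℝ) < (N : ℝ) := by exact_mod_cast hN1
      rw [Finset.prod_div_distrib, Finset.prod_const, Finset.card_range]
      rw [hdesc, hprod]
      ring
    have hfactor : ∀ i ∈ Finset.range n, Tendsto (fun N : ℕ => (((m N : ℤ) : ℝ) - i) / N)
        atTop (nhds (t - s)) := by
      intro i _
      have hlo : Tendsto (fun N : ℕ => (t - s) - (1 + C0 + i) / N) atTop (nhds (t - s)) := by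
        have := tendsto_const_div_atTop_nhds_zero_nat (1 + C0 + i)
        have h2 := tendsto_const_nhds (α := ℕ) (x := t - s) (f := atTop) |>.sub this
        simpa using h2
      have hhi : Tendsto (fun N : ℕ => (t - s) + 1 / N) atTop (nhds (t - s)) := by
        have := tendsto_const_div_atTop_nhds_zero_nat (1 : ℝ)
        have h2 := tendsto_const_nhds (α := ℕ) (x := t - s) (f := atTop) |>.add this
        simpa using h2
      apply tendsto_of_tendsto_of_tendsto_of_le_of_le' hlo hhi
      · filter_upwards [eventually_ge_atTop 1] with N hN1
        have hNpos : (0 : ℝ) < (N : ℝ) := by exact_mod_cast hN1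
        have hb := hlb N
        rw [le_div_iff₀ hNpos]
        have hc : (1 + C0 + (i : ℝ)) / N * N = 1 + C0 + i :=
          div_mul_cancel₀ _ (ne_of_gt hNpos)
        nlinarith
      · filter_upwards [eventually_ge_atTop 1] with N hN1
        have hNpos : (0 : ℝ) < (N : ℝ) := by exact_mod_cast hN1
        have hb := hub N
        have hi0 : (0 : ℝ) ≤ (i : ℝ) := Nat.cast_nonneg i
        rw [div_le_iff₀ hNpos]
        have hc : (1 / (N : ℝ)) * N = 1 := by field_simp
        nlinarith
    have hprodlim : Tendsto (fun N : ℕ => ∏ i ∈ Finset.range n, (((m N : ℤ) : ℝ) - i) / N)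
        atTop (nhds ((t - s) ^ n)) := by
      have := tendsto_finset_prod (Finset.range n)
        (fun i hi => hfactor i hi)
      simpa [Finset.prod_const, Finset.card_range] using this
    have : Tendsto (fun N : ℕ =>
        (∏ i ∈ Finset.range n, (((m N : ℤ) : ℝ) - i) / N) / (n.factorial : ℝ))
        atTop (nhds ((t - s) ^ n / (n.factorial : ℝ))) := hprodlim.div_const _
    exact Tendsto.congr' (keyeq.mono fun N h => h.symm) this
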